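/- Let A be a superalgebra with superinvolution * over a commutative unital ring φ with 1/2 ∈ φ, let U be a Lie ideal of K, and let ū denote the subalgebra of A generated by U. Then the φ-module spanned by [ū, A] equals the φ-module spanned by [U, A] (superbrackets of homogeneous elements); consequently, if J is an ideal of A with J ⊆ ū, then [J ∩ K, K] ⊆ U. -/

import Mathlib

open DirectSum

/-- The sign `(−1)^{ij}` for degrees `i j : ZMod 2`. -/
def ssign (i j : ZMod 2) : ℤ := if i = 1 ∧ j = 1 then -1 else 1

variable {φ A : Type*}

section
variable [CommRing φ] [Ring A] [Algebra φ A]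

/-- Superbracket `[x,y] = xy − (−1)^{ij} yx` of homogeneous elements of degrees `i`, `j`. -/
def sbr (i j : ZMod 2) (x y : A) : A := x * y - ssign i j • (y * x)

/-- Supercircle product `x∘y = xy + (−1)^{ij} yx` of homogeneous elements of degrees `i`, `j`. -/
def scirc (i j : ZMod 2) (x y : A) : A := x * y + ssign i j • (y * x)

/-- A graded two-sided ideal of the superalgebra `A = ⨁ 𝒜 i`. -/
structure SuperIdeal (𝒜 : ZMod 2 → Submodule φ A) [GradedAlgebra 𝒜] where
  carrier : Submodule φ A
  mul_mem_left : ∀ (a x : A), x ∈ carrier → a * x ∈ carrier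
  mul_mem_right : ∀ (a x : A), x ∈ carrier → x * a ∈ carrier
  graded' : ∀ (i : ZMod 2), ∀ x ∈ carrier, ((DirectSum.decompose 𝒜 x) i : A) ∈ carrier

variable (𝒜 : ZMod 2 → Submodule φ A)

/-- A superalgebra is prime if `I⬝J = 0` forces `I = 0` or `J = 0` for graded ideals `I`, `J`. -/
def SuperPrime [GradedAlgebra 𝒜] : Prop :=
  ∀ I J : SuperIdeal 𝒜, (∀ x ∈ I.carrier, ∀ y ∈ J.carrier, x * y = 0) →
    I.carrier = ⊥ ∨ J.carrier = ⊥

/-- A superalgebra is semiprime if it has no nonzero graded ideal of square zero. -/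
def SuperSemiprime [GradedAlgebra 𝒜] : Prop :=
  ∀ I : SuperIdeal 𝒜, (∀ x ∈ I.carrier, ∀ y ∈ I.carrier, x * y = 0) → I.carrier = ⊥

/-- `Z`, the even part of the center of `A`. -/
def evenCenter : Set A := {z : A | z ∈ 𝒜 0 ∧ ∀ x : A, z * x = x * z}

/-- A subset `M` of `A` is dense if the (non-unital) subalgebra of `A` generated by `M`
contains a nonzero ideal of `A`. -/
def IsDenseIn [GradedAlgebra 𝒜] (M : Set A) : Prop :=
  ∃ J : SuperIdeal 𝒜, J.carrier ≠ ⊥ ∧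
    (J.carrier : Set A) ⊆ NonUnitalAlgebra.adjoin φ M

/-- A superinvolution on the superalgebra `A`. -/
structure Superinvolution (𝒜 : ZMod 2 → Submodule φ A) where
  toFun : A →ₗ[φ] A
  grading : ∀ (i : ZMod 2), ∀ x ∈ 𝒜 i, toFun x ∈ 𝒜 i
  invol : ∀ x : A, toFun (toFun x) = x
  mul_rev : ∀ (i j : ZMod 2), ∀ x ∈ 𝒜 i, ∀ y ∈ 𝒜 j,
    toFun (x * y) = ssign i j • (toFun y * toFun x)

/-- A Lie ideal of the Lie superalgebra `K` of skew elements of `(A,*)`: a graded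
`φ`-submodule of `K` with `[U,K] ⊆ U`. -/
structure LieIdealOfSkew [GradedAlgebra 𝒜] (σ : Superinvolution 𝒜) where
  carrier : Submodule φ A
  skew : ∀ x ∈ carrier, σ.toFun x = -x
  graded' : ∀ (i : ZMod 2), ∀ x ∈ carrier, ((DirectSum.decompose 𝒜 x) i : A) ∈ carrier
  bracket_mem : ∀ (i j : ZMod 2) (u k : A), u ∈ carrier → u ∈ 𝒜 i →
    k ∈ 𝒜 j → σ.toFun k = -k → sbr i j u k ∈ carrier

/-- The additive span of superbrackets of homogeneous elements of `S` and `T`. -/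
def superBrAdd (S T : Set A) : AddSubgroup A :=
  AddSubgroup.closure
    {z : A | ∃ (i j : ZMod 2) (x y : A), x ∈ S ∧ x ∈ 𝒜 i ∧ y ∈ T ∧ y ∈ 𝒜 j ∧ z = sbr i j x y}

/-- The `φ`-submodule spanned by superbrackets of homogeneous elements of `S` and `T`. -/
def superBrSpan (S T : Set A) : Submodule φ A :=
  Submodule.span φ
    {z : A | ∃ (i j : ZMod 2) (x y : A), x ∈ S ∧ x ∈ 𝒜 i ∧ y ∈ T ∧ y ∈ 𝒜 j ∧ z = sbr i j x y}

end

/-- Data exhibiting the prime superalgebra `A` as a central order in a simple superalgebra `B`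
that is 4-dimensional over its center. -/
structure CentralOrderIn4DimSimple (φ : Type*) [CommRing φ] {A : Type*} [Ring A] [Algebra φ A]
    (𝒜 : ZMod 2 → Submodule φ A) [GradedAlgebra 𝒜] where
  B : Type
  [ringB : Ring B]
  [algB : Algebra φ B]
  ℬ : ZMod 2 → Submodule φ B
  [gradedB : GradedAlgebra ℬ]
  ι : A →ₐ[φ] B
  inj : Function.Injective ι
  grading : ∀ (i : ZMod 2), ∀ x ∈ 𝒜 i, ι x ∈ ℬ i
  central_unit : ∀ z ∈ evenCenter 𝒜, z ≠ 0 → IsUnit (ι z)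
  localized : ∀ b : B, ∃ z a : A, z ∈ evenCenter 𝒜 ∧ z ≠ 0 ∧ ι z * b = ι a
  sq_ne_zero : ∃ x y : B, x * y ≠ 0
  simple : ∀ J : SuperIdeal ℬ, J.carrier = ⊥ ∨ J.carrier = ⊤
  dim4 : Module.finrank (Subring.center B) B = 4


section AuxLemmas

variable [CommRing φ] [Ring A] [Algebra φ A]

lemma sbr_zero_left (i j : ZMod 2) (a : A) : sbr i j (0 : A) a = 0 := by
  simp [sbr]

lemma sbr_add_left (i j : ZMod 2) (x y a : A) :
    sbr i j (x + y) a = sbr i j x a + sbr i j y a := by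
  simp only [sbr, add_mul, mul_add, smul_add]; abel

lemma sbr_add_right (i j : ZMod 2) (x a b : A) :
    sbr i j x (a + b) = sbr i j x a + sbr i j x b := by
  simp only [sbr, add_mul, mul_add, smul_add]; abel

lemma sbr_smul_left (i j : ZMod 2) (c : φ) (x a : A) :
    sbr i j (c • x) a = c • sbr i j x a := by
  simp only [sbr, smul_mul_assoc, mul_smul_comm, smul_sub]
  rw [smul_comm]

lemma sbr_mul_left (p q j : ZMod 2) (x y a : A) :
    sbr (p + q) j (x * y) a
      = sbr p (q + j) x (y * a) + ssign p (q + j) • sbr q (j + p) y (a * x) := by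
  have h : ssign p (q + j) * ssign q (j + p) = ssign (p + q) j := by
    revert p q j; decide
  simp only [sbr, smul_sub, smul_smul, h, mul_assoc]
  abel

variable (𝒜 : ZMod 2 → Submodule φ A) [GradedAlgebra 𝒜]

lemma decompose_two (x : A) :
    (DirectSum.decompose 𝒜 x 0 : A) + (DirectSum.decompose 𝒜 x 1 : A) = x := by
  classical
  have h := DirectSum.sum_support_decompose 𝒜 x
  have h2 : ∑ i : ZMod 2, (DirectSum.decompose 𝒜 x i : A) = x :=
    (Finset.sum_subset (Finset.subset_univ _)
      (fun i _ hi => by rw [DFinsupp.notMem_support_iff.mp hi]; rfl)).symm.trans h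
  have huniv : (Finset.univ : Finset (ZMod 2)) = {0, 1} := by decide
  rw [huniv, Finset.sum_pair (by decide : (0 : ZMod 2) ≠ 1)] at h2
  exact h2

lemma decompose_two' (i : ZMod 2) (x : A) :
    (DirectSum.decompose 𝒜 x i : A) + (DirectSum.decompose 𝒜 x (i + 1) : A) = x := by
  fin_cases i
  · exact decompose_two 𝒜 x
  · rw [add_comm]; exact decompose_two 𝒜 x

lemma decompose_mul_apply (i : ZMod 2) (x y : A) :
    (DirectSum.decompose 𝒜 (x * y) i : A)
      = (DirectSum.decompose 𝒜 x 0 : A) * (DirectSum.decompose 𝒜 y i : A)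
        + (DirectSum.decompose 𝒜 x 1 : A) * (DirectSum.decompose 𝒜 y (i + 1) : A) := by
  have hne : ∀ k : ZMod 2, k + 1 ≠ k := by decide
  have e1 : ∀ k : ZMod 2, (1 : ZMod 2) + (k + 1) = k := by decide
  conv_lhs => rw [← decompose_two 𝒜 x, ← decompose_two' 𝒜 i y]
  rw [add_mul, mul_add, mul_add]
  have m00 : (DirectSum.decompose 𝒜 x 0 : A) * (DirectSum.decompose 𝒜 y i : A) ∈ 𝒜 (0 + i) :=
    SetLike.mul_mem_graded (SetLike.coe_mem _) (SetLike.coe_mem _)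
  rw [zero_add] at m00
  have m01 : (DirectSum.decompose 𝒜 x 0 : A) * (DirectSum.decompose 𝒜 y (i+1) : A) ∈ 𝒜 (0 + (i+1)) :=
    SetLike.mul_mem_graded (SetLike.coe_mem _) (SetLike.coe_mem _)
  rw [zero_add] at m01
  have m10 : (DirectSum.decompose 𝒜 x 1 : A) * (DirectSum.decompose 𝒜 y i : A) ∈ 𝒜 (1 + i) :=
    SetLike.mul_mem_graded (SetLike.coe_mem _) (SetLike.coe_mem _)
  have m11 : (DirectSum.decompose 𝒜 x 1 : A) * (DirectSum.decompose 𝒜 y (i+1) : A) ∈ 𝒜 (1 + (i+1)) :=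
    SetLike.mul_mem_graded (SetLike.coe_mem _) (SetLike.coe_mem _)
  rw [e1 i] at m11
  simp only [DirectSum.decompose_add, DirectSum.add_apply, Submodule.coe_add]
  rw [DirectSum.decompose_of_mem_same 𝒜 m00, DirectSum.decompose_of_mem_same 𝒜 m11,
    DirectSum.decompose_of_mem_ne 𝒜 m01 (hne i),
    DirectSum.decompose_of_mem_ne 𝒜 m10 (by rw [add_comm]; exact hne i)]
  abel

lemma ssign_comm (i j : ZMod 2) : ssign j i = ssign i j := by revert i j; decide

lemma ssign_sq (i j : ZMod 2) : ssign i j * ssign i j = 1 := by revert i j; decide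

lemma sigma_sbr_skew_skew (σ : Superinvolution 𝒜) {i j : ZMod 2} {x y : A}
    (hx : x ∈ 𝒜 i) (hy : y ∈ 𝒜 j) (hsx : σ.toFun x = -x) (hsy : σ.toFun y = -y) :
    σ.toFun (sbr i j x y) = -(sbr i j x y) := by
  have h1 := σ.mul_rev i j x hx y hy
  have h2 := σ.mul_rev j i y hy x hx
  have hsym := ssign_comm i j
  have hsq := ssign_sq i j
  simp only [sbr, map_sub, map_zsmul, h1, h2, hsx, hsy, hsym, neg_mul, mul_neg, neg_neg,
    smul_smul, hsq, one_smul]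
  abel

lemma sigma_sbr_skew_sym (σ : Superinvolution 𝒜) {i j : ZMod 2} {x y : A}
    (hx : x ∈ 𝒜 i) (hy : y ∈ 𝒜 j) (hsx : σ.toFun x = -x) (hsy : σ.toFun y = y) :
    σ.toFun (sbr i j x y) = sbr i j x y := by
  have h1 := σ.mul_rev i j x hx y hy
  have h2 := σ.mul_rev j i y hy x hx
  have hsym := ssign_comm i j
  have hsq := ssign_sq i j
  simp only [sbr, map_sub, map_zsmul, h1, h2, hsx, hsy, hsym, neg_mul, mul_neg, neg_neg,
    smul_neg, smul_smul, hsq, one_smul]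
  abel

lemma key_induction (σ : Superinvolution 𝒜) (U : LieIdealOfSkew 𝒜 σ) :
    ∀ x ∈ NonUnitalAlgebra.adjoin φ (U.carrier : Set A),
      ∀ (i j : ZMod 2) (a : A), a ∈ 𝒜 j →
        sbr i j ((DirectSum.decompose 𝒜 x i : A)) a
          ∈ superBrSpan 𝒜 (U.carrier : Set A) Set.univ := by
  intro x hx
  induction hx using NonUnitalAlgebra.adjoin_induction with
  | mem u hu =>
    intro i j a haj
    exact Submodule.subset_span
      ⟨i, j, _, a, U.graded' i u hu, SetLike.coe_mem _, trivial, haj, rfl⟩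
  | zero =>
    intro i j a haj
    simp [sbr_zero_left]
  | add x y hx hy ihx ihy =>
    intro i j a haj
    have : (DirectSum.decompose 𝒜 (x + y) i : A)
        = (DirectSum.decompose 𝒜 x i : A) + (DirectSum.decompose 𝒜 y i : A) := by
      rw [DirectSum.decompose_add, DirectSum.add_apply]; rfl
    rw [this, sbr_add_left]
    exact add_mem (ihx i j a haj) (ihy i j a haj)
  | smul c x hx ihx =>
    intro i j a haj
    have : (DirectSum.decompose 𝒜 (c • x) i : A)
        = c • (DirectSum.decompose 𝒜 x i : A) := by
      rw [DirectSum.decompose_smul, DirectSum.smul_apply]; rfl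
    rw [this, sbr_smul_left]
    exact Submodule.smul_mem _ _ (ihx i j a haj)
  | mul x y hx hy ihx ihy =>
    intro i j a haj
    rw [decompose_mul_apply]
    have e1 : ∀ k : ZMod 2, (1 : ZMod 2) + (k + 1) = k := by decide
    have T1 : sbr i j ((DirectSum.decompose 𝒜 x 0 : A) * (DirectSum.decompose 𝒜 y i : A)) a
        ∈ superBrSpan 𝒜 (U.carrier : Set A) Set.univ := by
      have id1 := sbr_mul_left 0 i j (DirectSum.decompose 𝒜 x 0 : A)
        (DirectSum.decompose 𝒜 y i : A) a
      rw [zero_add, add_zero] at id1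
      rw [id1]
      refine add_mem (ihx 0 (i + j) _ ?_) (zsmul_mem (ihy i j _ ?_) _)
      · exact SetLike.mul_mem_graded (SetLike.coe_mem _) haj
      · have := SetLike.mul_mem_graded haj (SetLike.coe_mem (DirectSum.decompose 𝒜 x 0))
        rwa [add_zero] at this
    have T2 : sbr i j ((DirectSum.decompose 𝒜 x 1 : A) * (DirectSum.decompose 𝒜 y (i+1) : A)) a
        ∈ superBrSpan 𝒜 (U.carrier : Set A) Set.univ := by
      have id2 := sbr_mul_left 1 (i + 1) j (DirectSum.decompose 𝒜 x 1 : A)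
        (DirectSum.decompose 𝒜 y (i+1) : A) a
      rw [e1 i] at id2
      rw [id2]
      refine add_mem (ihx 1 ((i + 1) + j) _ ?_) (zsmul_mem (ihy (i+1) (j+1) _ ?_) _)
      · exact SetLike.mul_mem_graded (SetLike.coe_mem _) haj
      · exact SetLike.mul_mem_graded haj (SetLike.coe_mem _)
    rw [sbr_add_left]
    exact add_mem T1 T2

end AuxLemmas

/-- Let `A` be a superalgebra with superinvolution over a commutative ring `φ` with `½ ∈ φ`,
`U` a Lie ideal of `K`, and `ū` the subalgebra of `A` generated by `U`. Then the `φ`-module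
spanned by `[ū, A]` equals the `φ`-module spanned by `[U, A]`; consequently, if `J` is an
ideal of `A` with `J ⊆ ū`, then `[J ∩ K, K] ⊆ U`. -/
theorem bracket_span_adjoin_eq_and_ideal_bracket_in_U
    {φ A : Type*} [CommRing φ] [Invertible (2 : φ)] [Ring A] [Algebra φ A]
    (𝒜 : ZMod 2 → Submodule φ A) [GradedAlgebra 𝒜]
    (σ : Superinvolution 𝒜) (U : LieIdealOfSkew 𝒜 σ) :
    superBrSpan 𝒜 (NonUnitalAlgebra.adjoin φ (U.carrier : Set A) : Set A) Set.univ =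
      superBrSpan 𝒜 (U.carrier : Set A) Set.univ ∧
    (∀ J : SuperIdeal 𝒜,
      (J.carrier : Set A) ⊆ NonUnitalAlgebra.adjoin φ (U.carrier : Set A) →
      ∀ (i j : ZMod 2) (x k : A), x ∈ J.carrier → σ.toFun x = -x → x ∈ 𝒜 i →
        k ∈ 𝒜 j → σ.toFun k = -k → sbr i j x k ∈ U.carrier) := by
  have part1 : superBrSpan 𝒜 (NonUnitalAlgebra.adjoin φ (U.carrier : Set A) : Set A) Set.univ =
      superBrSpan 𝒜 (U.carrier : Set A) Set.univ := by
    apply le_antisymm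
    · apply Submodule.span_le.2
      rintro z ⟨i, j, x, a, hxA, hxi, -, haj, rfl⟩
      have h := key_induction 𝒜 σ U x hxA i j a haj
      rwa [DirectSum.decompose_of_mem_same 𝒜 hxi] at h
    · apply Submodule.span_mono
      rintro z ⟨i, j, x, a, hx, hxi, -, haj, rfl⟩
      exact ⟨i, j, x, a, NonUnitalAlgebra.subset_adjoin φ hx, hxi, trivial, haj, rfl⟩
  refine ⟨part1, ?_⟩
  intro J hJ i j x k hxJ hσx hxi hkj hσk
  -- the symmetric elements form a submodule
  set Hsym : Submodule φ A := LinearMap.eqLocus σ.toFun LinearMap.id with hHsym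
  have T_le : superBrSpan 𝒜 (U.carrier : Set A) Set.univ ≤ U.carrier ⊔ Hsym := by
    apply Submodule.span_le.2
    rintro z ⟨i', j', u, a, hu, hui, -, haj, rfl⟩
    have hσu : σ.toFun u = -u := U.skew u hu
    set h := (⅟(2:φ)) • (a + σ.toFun a) with hh
    set k' := (⅟(2:φ)) • (a - σ.toFun a) with hk'
    have hadd : a = h + k' := by
      rw [hh, hk', ← smul_add]
      have : a + σ.toFun a + (a - σ.toFun a) = (2:φ) • a := by
        rw [two_smul]; abel
      rw [this, invOf_smul_smul]
    have hh𝒜 : h ∈ 𝒜 j' := Submodule.smul_mem _ _ (add_mem haj (σ.grading j' a haj))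
    have hk𝒜 : k' ∈ 𝒜 j' := Submodule.smul_mem _ _ (sub_mem haj (σ.grading j' a haj))
    have hσh : σ.toFun h = h := by
      rw [hh, map_smul, map_add, σ.invol, add_comm]
    have hσk' : σ.toFun k' = -k' := by
      rw [hk', map_smul, map_sub, σ.invol, ← smul_neg, neg_sub]
    rw [hadd, sbr_add_right]
    refine add_mem (Submodule.mem_sup_right ?_) (Submodule.mem_sup_left ?_)
    · exact sigma_sbr_skew_sym 𝒜 σ hui hh𝒜 hσu hσh
    · exact U.bracket_mem i' j' u k' hu hui hk𝒜 hσk'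
  have hT : sbr i j x k ∈ superBrSpan 𝒜 (U.carrier : Set A) Set.univ := by
    rw [← part1]
    exact Submodule.subset_span ⟨i, j, x, k, hJ hxJ, hxi, trivial, hkj, rfl⟩
  rcases Submodule.mem_sup.1 (T_le hT) with ⟨u, hu, h, hh, heq⟩
  have hskew : σ.toFun (sbr i j x k) = -(sbr i j x k) :=
    sigma_sbr_skew_skew 𝒜 σ hxi hkj hσx hσk
  have hσu : σ.toFun u = -u := U.skew u hu
  have hσh : σ.toFun h = h := hh
  have hsum : h + h = 0 := by
    have e : σ.toFun (u + h) = -(u + h) := by rw [heq]; exact hskew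
    rw [map_add, hσu, hσh, neg_add] at e
    have hneg : h = -h := add_left_cancel e
    nth_rewrite 2 [hneg]
    exact add_neg_cancel h
  have h0 : h = 0 := by
    have h2 : (2:φ) • h = 0 := by rw [two_smul]; exact hsum
    calc h = ⅟(2:φ) • ((2:φ) • h) := (invOf_smul_smul 2 h).symm
    _ = 0 := by rw [h2, smul_zero]
  rw [← heq, h0, add_zero]
  exact hu
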